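/- arXiv:2301.01816 — 3 statements merged into one kernel-verified Lean document; each statement's English description precedes it below -/
import Mathlib

section
/- The map exp_α sending a linear functional ψ on the free (non-unital) tensor algebra T₀(V) to the functional exp_α(ψ)(x₁⋯xₙ) := Σ_{π ∈ P(n)} α_π · ψ^{⊗|π|}(x_π), where α is a monic family of weights on partitions, is a bijection on the dual space T₀(V)'. -/
/-- `P` is a set partition of the finite set `S`. -/
def IsPartitionOf {γ : Type} [DecidableEq γ] (S : Finset γ) (P : Finset (Finset γ)) : Prop :=
  (∀ b ∈ P, b.Nonempty ∧ b ⊆ S) ∧ ∀ i ∈ S, (P.filter (fun b => i ∈ b)).card = 1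

instance {γ : Type} [DecidableEq γ] (S : Finset γ) : DecidablePred (IsPartitionOf S) := by
  intro P; unfold IsPartitionOf; infer_instance

/-- The finite set of all set partitions of `S ⊆ Fin n`. -/
def partitionsOf {n : ℕ} (S : Finset (Fin n)) : Finset (Finset (Finset (Fin n))) :=
  Finset.univ.filter (IsPartitionOf S)

/-- A multi-faced partition: a length, a face word and a set partition (as a setoid). -/
structure MFP (F : Type) where
  n : ℕ
  face : Fin n → F
  rel : Setoid (Fin n)

/-- The multi-faced partition on `S` (with the induced order) with faces induced by the
face word `f` and blocks given by `P`. -/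
def MFP.ofBlocks {F : Type} {n : ℕ} (f : Fin n → F) (S : Finset (Fin n))
    (P : Finset (Finset (Fin n))) : MFP F where
  n := S.card
  face := fun j => f (S.orderIsoOfFin rfl j).1
  rel := Setoid.ker (fun j => P.filter (fun b => (S.orderIsoOfFin rfl j).1 ∈ b))

namespace Stmt3Aux

open Finset

lemma mem_partitionsOf {n : ℕ} {P : Finset (Finset (Fin n))} :
    P ∈ partitionsOf (Finset.univ : Finset (Fin n)) ↔
      IsPartitionOf (Finset.univ : Finset (Fin n)) P := by
  simp [partitionsOf]

lemma exists_unique_block {n : ℕ} {P : Finset (Finset (Fin n))}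
    (hP : IsPartitionOf (Finset.univ : Finset (Fin n)) P) (i : Fin n) :
    ∃ β₀ ∈ P, i ∈ β₀ ∧ ∀ b ∈ P, i ∈ b → b = β₀ := by
  have h := hP.2 i (Finset.mem_univ i)
  obtain ⟨β₀, hβ₀⟩ := Finset.card_eq_one.1 h
  have hmem : β₀ ∈ P.filter (fun b => i ∈ b) := hβ₀ ▸ Finset.mem_singleton_self β₀
  rw [Finset.mem_filter] at hmem
  refine ⟨β₀, hmem.1, hmem.2, fun b hb hib => ?_⟩
  have : b ∈ P.filter (fun b => i ∈ b) := Finset.mem_filter.2 ⟨hb, hib⟩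
  rwa [hβ₀, Finset.mem_singleton] at this

lemma block_card_lt {n : ℕ} {P : Finset (Finset (Fin n))}
    (hP : IsPartitionOf (Finset.univ : Finset (Fin n)) P)
    (hne : P ≠ {Finset.univ}) {β : Finset (Fin n)} (hβ : β ∈ P) : β.card < n := by
  have hsub : β ⊆ Finset.univ := (hP.1 β hβ).2
  have hne' : β ≠ Finset.univ := by
    rintro rfl
    apply hne
    apply Finset.eq_singleton_iff_unique_mem.2
    refine ⟨hβ, fun b hb => ?_⟩
    obtain ⟨j, hj⟩ := (hP.1 b hb).1
    obtain ⟨β₀, hβ₀P, hjβ₀, huniq⟩ := exists_unique_block hP j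
    rw [huniq b hb hj, ← huniq Finset.univ hβ (Finset.mem_univ j)]
  have h1 : β.card < (Finset.univ : Finset (Fin n)).card :=
    Finset.card_lt_card (Finset.ssubset_iff_subset_ne.2 ⟨hsub, hne'⟩)
  simpa using h1

lemma isPartitionOf_univ_singleton {n : ℕ} (hn : 0 < n) :
    IsPartitionOf (Finset.univ : Finset (Fin n)) ({Finset.univ} : Finset (Finset (Fin n))) := by
  constructor
  · intro b hb
    rw [Finset.mem_singleton] at hb
    subst hb
    haveI : Nonempty (Fin n) := ⟨⟨0, hn⟩⟩
    exact ⟨Finset.univ_nonempty, le_refl _⟩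
  · intro i _
    rw [Finset.filter_singleton, if_pos (Finset.mem_univ i), Finset.card_singleton]

lemma univ_mem_partitionsOf {n : ℕ} (hn : 0 < n) :
    ({Finset.univ} : Finset (Finset (Fin n))) ∈ partitionsOf (Finset.univ : Finset (Fin n)) :=
  mem_partitionsOf.2 (isPartitionOf_univ_singleton hn)

lemma orderIso_univ_apply {n : ℕ} (j : Fin (Finset.univ : Finset (Fin n)).card) :
    ((Finset.univ : Finset (Fin n)).orderIsoOfFin rfl j).1
      = Fin.cast (by simp) j := by
  have h := Finset.orderEmbOfFin_unique (s := (Finset.univ : Finset (Fin n))) rfl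
      (f := fun j => Fin.cast (by simp : (Finset.univ : Finset (Fin n)).card = n) j)
      (fun x => Finset.mem_univ _) (fun a b hab => hab)
  have h2 : ((Finset.univ : Finset (Fin n)).orderIsoOfFin rfl j).1
      = (Finset.univ : Finset (Fin n)).orderEmbOfFin rfl j := rfl
  rw [h2, ← h]

variable {F : Type} {V : F → Type} [∀ Q, AddCommGroup (V Q)] [∀ Q, Module ℂ (V Q)]

/-- The recursively defined inverse `log_α(φ)`. -/
noncomputable def gfun (α : MFP F → ℂ)
    (φ : ∀ (n : ℕ) (f : Fin n → F), MultilinearMap ℂ (fun i => V (f i)) ℂ) :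
    (n : ℕ) → (f : Fin n → F) → (∀ i, V (f i)) → ℂ
  | n, f, x => φ n f x -
      ∑ P ∈ (partitionsOf (Finset.univ : Finset (Fin n))).erase {Finset.univ},
        α (MFP.ofBlocks f Finset.univ P) *
          ∏ β ∈ P,
            if h : β.card < n then
              gfun α φ β.card (fun j => f (β.orderIsoOfFin rfl j).1)
                (fun j => x (β.orderIsoOfFin rfl j).1)
            else 0
  termination_by n _ _ => n
  decreasing_by exact h

/-- The correction sum. -/
noncomputable def Ssum (α : MFP F → ℂ)
    (φ : ∀ (n : ℕ) (f : Fin n → F), MultilinearMap ℂ (fun i => V (f i)) ℂ)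
    (n : ℕ) (f : Fin n → F) (x : ∀ i, V (f i)) : ℂ :=
  ∑ P ∈ (partitionsOf (Finset.univ : Finset (Fin n))).erase {Finset.univ},
    α (MFP.ofBlocks f Finset.univ P) *
      ∏ β ∈ P, gfun α φ β.card (fun j => f (β.orderIsoOfFin rfl j).1)
        (fun j => x (β.orderIsoOfFin rfl j).1)

variable (α : MFP F → ℂ)
  (φ : ∀ (n : ℕ) (f : Fin n → F), MultilinearMap ℂ (fun i => V (f i)) ℂ)

lemma gfun_eq {n : ℕ} (f : Fin n → F) (x : ∀ i, V (f i)) :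
    gfun α φ n f x = φ n f x - Ssum α φ n f x := by
  rw [gfun]
  congr 1
  unfold Ssum
  refine Finset.sum_congr rfl fun P hP => ?_
  congr 1
  refine Finset.prod_congr rfl fun β hβ => ?_
  rw [dif_pos (block_card_lt (mem_partitionsOf.1 (Finset.mem_of_mem_erase hP))
    (Finset.ne_of_mem_erase hP) hβ)]

lemma eval_cast (χ : ∀ (n : ℕ) (f : Fin n → F), MultilinearMap ℂ (fun i => V (f i)) ℂ)
    {m n : ℕ} (h : m = n) (f : Fin n → F) (x : ∀ i, V (f i)) :
    χ m (fun j => f (Fin.cast h j)) (fun j => x (Fin.cast h j)) = χ n f x := by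
  subst h; rfl

lemma eval_restrict_univ (χ : ∀ (n : ℕ) (f : Fin n → F), MultilinearMap ℂ (fun i => V (f i)) ℂ)
    {n : ℕ} (f : Fin n → F) (x : ∀ i, V (f i)) :
    χ (Finset.univ : Finset (Fin n)).card
      (fun j => f ((Finset.univ : Finset (Fin n)).orderIsoOfFin rfl j).1)
      (fun j => x ((Finset.univ : Finset (Fin n)).orderIsoOfFin rfl j).1) = χ n f x := by
  have hcard : (Finset.univ : Finset (Fin n)).card = n := by simp
  have key : ∀ (m : ℕ) (h : m = n) (e : Fin m → Fin n), (∀ j, e j = Fin.cast h j) →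
      χ m (fun j => f (e j)) (fun j => x (e j)) = χ n f x := by
    intro m h e he
    have he' : e = fun j => Fin.cast h j := funext he
    subst he'
    subst h
    rfl
  exact key _ hcard _ (fun j => orderIso_univ_apply j)

lemma restrict_update_not_mem {n : ℕ} {f : Fin n → F}
    (x : ∀ i, V (f i)) {i : Fin n} (v : V (f i)) {β : Finset (Fin n)} (hi : i ∉ β) :
    (fun j => Function.update x i v (β.orderIsoOfFin rfl j).1)
      = fun j => x (β.orderIsoOfFin rfl j).1 := by
  funext j
  have hne : ((β.orderIsoOfFin rfl j) : Fin n) ≠ i := fun h => hi (h ▸ (β.orderIsoOfFin rfl j).2)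
  exact Function.update_of_ne hne v x

lemma restrict_update_mem {n : ℕ} {f : Fin n → F}
    (x : ∀ i, V (f i)) {β : Finset (Fin n)} (j₀ : Fin β.card)
    (v : V (f (β.orderIsoOfFin rfl j₀).1)) :
    (fun j => Function.update x (β.orderIsoOfFin rfl j₀).1 v (β.orderIsoOfFin rfl j).1)
      = Function.update (fun j => x (β.orderIsoOfFin rfl j).1) j₀ v := by
  funext j
  by_cases hj : j = j₀
  · subst hj; rw [Function.update_self, Function.update_self]
  · rw [Function.update_of_ne hj, Function.update_of_ne]
    intro h
    exact hj ((β.orderIsoOfFin rfl).injective (Subtype.ext h))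

lemma prod_update_split {n : ℕ} {f : Fin n → F}
    {P : Finset (Finset (Fin n))} {β₀ : Finset (Fin n)} (hβ₀ : β₀ ∈ P)
    (x : ∀ i, V (f i)) (j₀ : Fin β₀.card)
    (huniq : ∀ b ∈ P, (β₀.orderIsoOfFin rfl j₀).1 ∈ b → b = β₀)
    (u : V (f (β₀.orderIsoOfFin rfl j₀).1)) :
    (∏ β ∈ P, gfun α φ β.card (fun j => f (β.orderIsoOfFin rfl j).1)
        (fun j => Function.update x (β₀.orderIsoOfFin rfl j₀).1 u (β.orderIsoOfFin rfl j).1))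
      = gfun α φ β₀.card (fun j => f (β₀.orderIsoOfFin rfl j).1)
          (Function.update (fun j => x (β₀.orderIsoOfFin rfl j).1) j₀ u)
        * ∏ β ∈ P.erase β₀, gfun α φ β.card (fun j => f (β.orderIsoOfFin rfl j).1)
            (fun j => x (β.orderIsoOfFin rfl j).1) := by
  rw [← Finset.mul_prod_erase _ _ hβ₀, restrict_update_mem]
  congr 1
  refine Finset.prod_congr rfl fun β hβ => ?_
  rw [restrict_update_not_mem]
  exact fun hmem => (Finset.ne_of_mem_erase hβ) (huniq β (Finset.mem_of_mem_erase hβ) hmem)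

lemma gfun_multilinear : ∀ (n : ℕ) (f : Fin n → F) (x : ∀ i, V (f i)) (i : Fin n),
    (∀ v w : V (f i),
      gfun α φ n f (Function.update x i (v + w))
        = gfun α φ n f (Function.update x i v) + gfun α φ n f (Function.update x i w)) ∧
    (∀ (c : ℂ) (v : V (f i)),
      gfun α φ n f (Function.update x i (c • v)) = c * gfun α φ n f (Function.update x i v)) := by
  intro n
  induction n using Nat.strong_induction_on with
  | _ n IH =>
    intro f x i
    have hsum : ∀ P ∈ (partitionsOf (Finset.univ : Finset (Fin n))).erase {Finset.univ},
        ∃ (m : ℕ) (_ : m < n) (g' : Fin m → F) (y : ∀ j, V (g' j)) (j₀ : Fin m)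
          (T : V (f i) → V (g' j₀)) (c : ℂ),
          (∀ u v : V (f i), T (u + v) = T u + T v) ∧
          (∀ (r : ℂ) (u : V (f i)), T (r • u) = r • T u) ∧
          ∀ u : V (f i),
            α (MFP.ofBlocks f Finset.univ P) *
              ∏ β ∈ P, gfun α φ β.card (fun j => f (β.orderIsoOfFin rfl j).1)
                (fun j => Function.update x i u (β.orderIsoOfFin rfl j).1)
              = gfun α φ m g' (Function.update y j₀ (T u)) * c := by
      intro P hP
      have hPmem : IsPartitionOf (Finset.univ : Finset (Fin n)) P :=
        mem_partitionsOf.1 (Finset.mem_of_mem_erase hP)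
      have hPne : P ≠ {Finset.univ} := Finset.ne_of_mem_erase hP
      obtain ⟨β₀, hβ₀, hiβ₀, huniq⟩ := exists_unique_block hPmem i
      obtain ⟨j₀, hj₀⟩ : ∃ j₀ : Fin β₀.card, (β₀.orderIsoOfFin rfl j₀).1 = i :=
        ⟨(β₀.orderIsoOfFin rfl).symm ⟨i, hiβ₀⟩, by simp⟩
      subst hj₀
      refine ⟨β₀.card, block_card_lt hPmem hPne hβ₀,
        (fun j => f (β₀.orderIsoOfFin rfl j).1), (fun j => x (β₀.orderIsoOfFin rfl j).1),
        j₀, id, α (MFP.ofBlocks f Finset.univ P) *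
          ∏ β ∈ P.erase β₀, gfun α φ β.card (fun j => f (β.orderIsoOfFin rfl j).1)
            (fun j => x (β.orderIsoOfFin rfl j).1),
        fun _ _ => rfl, fun _ _ => rfl, fun u => ?_⟩
      rw [prod_update_split α φ hβ₀ x j₀ huniq u]
      simp only [id_eq]
      ring
    constructor
    · intro v w
      rw [gfun_eq, gfun_eq, gfun_eq]
      have hS : Ssum α φ n f (Function.update x i (v + w))
          = Ssum α φ n f (Function.update x i v) + Ssum α φ n f (Function.update x i w) := by
        unfold Ssum
        rw [← Finset.sum_add_distrib]
        refine Finset.sum_congr rfl fun P hP => ?_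
        obtain ⟨m, hm, g', y, j₀, T, c, hTa, _, hval⟩ := hsum P hP
        rw [hval, hval, hval, hTa, (IH m hm g' y j₀).1 (T v) (T w)]
        ring
      rw [hS, MultilinearMap.map_update_add]
      ring
    · intro c v
      rw [gfun_eq, gfun_eq]
      have hS : Ssum α φ n f (Function.update x i (c • v))
          = c * Ssum α φ n f (Function.update x i v) := by
        unfold Ssum
        rw [Finset.mul_sum]
        refine Finset.sum_congr rfl fun P hP => ?_
        obtain ⟨m, hm, g', y, j₀, T, c', hTa, hTs, hval⟩ := hsum P hP
        rw [hval, hval, hTs, (IH m hm g' y j₀).2 c (T v)]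
        ring
      rw [hS, MultilinearMap.map_update_smul, smul_eq_mul]
      ring

/-- The bundled inverse family. -/
noncomputable def psi : ∀ (n : ℕ) (f : Fin n → F), MultilinearMap ℂ (fun i => V (f i)) ℂ :=
  fun n f =>
  { toFun := gfun α φ n f
    map_update_add' := by
      intro inst x i v w
      have h : inst = instDecidableEqFin n := Subsingleton.elim _ _
      subst h
      exact (gfun_multilinear α φ n f x i).1 v w
    map_update_smul' := by
      intro inst x i c v
      have h : inst = instDecidableEqFin n := Subsingleton.elim _ _
      subst h
      rw [smul_eq_mul]
      exact (gfun_multilinear α φ n f x i).2 c v }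

lemma psi_apply {n : ℕ} (f : Fin n → F) (x : ∀ i, V (f i)) :
    psi α φ n f x = gfun α φ n f x := rfl

lemma psi_spec
    (hmonic : ∀ (n : ℕ) (f : Fin n → F) (S : Finset (Fin n)), S.Nonempty →
      α (MFP.ofBlocks f S {S}) = 1)
    {n : ℕ} (hn : 0 < n) (f : Fin n → F) (x : ∀ i, V (f i)) :
    φ n f x = ∑ P ∈ partitionsOf (Finset.univ : Finset (Fin n)),
      α (MFP.ofBlocks f Finset.univ P) *
        ∏ β ∈ P, psi α φ β.card (fun j => f (β.orderIsoOfFin rfl j).1)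
          (fun j => x (β.orderIsoOfFin rfl j).1) := by
  haveI : Nonempty (Fin n) := ⟨⟨0, hn⟩⟩
  rw [← Finset.add_sum_erase _ _ (univ_mem_partitionsOf hn)]
  have hcard : (Finset.univ : Finset (Fin n)).card = n := by simp
  have h1 : (∏ β ∈ ({Finset.univ} : Finset (Finset (Fin n))), psi α φ β.card
      (fun j => f (β.orderIsoOfFin rfl j).1) (fun j => x (β.orderIsoOfFin rfl j).1))
      = gfun α φ n f x := by
    rw [Finset.prod_singleton]
    rw [eval_restrict_univ (psi α φ) f x, psi_apply]
  rw [h1, hmonic n f Finset.univ Finset.univ_nonempty, one_mul, gfun_eq]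
  simp only [psi_apply, Ssum]
  ring

lemma psi_unique
    (hmonic : ∀ (n : ℕ) (f : Fin n → F) (S : Finset (Fin n)), S.Nonempty →
      α (MFP.ofBlocks f S {S}) = 1)
    (ψ' : ∀ (n : ℕ) (f : Fin n → F), MultilinearMap ℂ (fun i => V (f i)) ℂ)
    (H : ∀ (n : ℕ), 0 < n → ∀ (f : Fin n → F) (x : ∀ i, V (f i)),
      φ n f x = ∑ P ∈ partitionsOf (Finset.univ : Finset (Fin n)),
        α (MFP.ofBlocks f Finset.univ P) *
          ∏ β ∈ P, ψ' β.card (fun j => f (β.orderIsoOfFin rfl j).1)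
            (fun j => x (β.orderIsoOfFin rfl j).1)) :
    ∀ (n : ℕ), 0 < n → ∀ f : Fin n → F, ψ' n f = psi α φ n f := by
  intro n
  induction n using Nat.strong_induction_on with
  | _ n IH =>
    intro hn f
    ext x
    show ψ' n f x = gfun α φ n f x
    haveI : Nonempty (Fin n) := ⟨⟨0, hn⟩⟩
    have hcard : (Finset.univ : Finset (Fin n)).card = n := by simp
    have hH := H n hn f x
    rw [← Finset.add_sum_erase _ _ (univ_mem_partitionsOf hn)] at hH
    have h1 : (α (MFP.ofBlocks f Finset.univ ({Finset.univ} : Finset (Finset (Fin n)))) *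
        ∏ β ∈ ({Finset.univ} : Finset (Finset (Fin n))), ψ' β.card
          (fun j => f (β.orderIsoOfFin rfl j).1) (fun j => x (β.orderIsoOfFin rfl j).1))
        = ψ' n f x := by
      rw [hmonic n f Finset.univ Finset.univ_nonempty, one_mul, Finset.prod_singleton]
      rw [eval_restrict_univ ψ' f x]
    have h2 : (∑ P ∈ (partitionsOf (Finset.univ : Finset (Fin n))).erase {Finset.univ},
        α (MFP.ofBlocks f Finset.univ P) *
          ∏ β ∈ P, ψ' β.card (fun j => f (β.orderIsoOfFin rfl j).1)
            (fun j => x (β.orderIsoOfFin rfl j).1))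
        = Ssum α φ n f x := by
      unfold Ssum
      refine Finset.sum_congr rfl fun P hP => ?_
      congr 1
      refine Finset.prod_congr rfl fun β hβ => ?_
      have hPm := mem_partitionsOf.1 (Finset.mem_of_mem_erase hP)
      have hlt := block_card_lt hPm (Finset.ne_of_mem_erase hP) hβ
      have hpos : 0 < β.card := Finset.card_pos.2 (hPm.1 β hβ).1
      rw [IH β.card hlt hpos (fun j => f (β.orderIsoOfFin rfl j).1)]
      rfl
    rw [h1, h2] at hH
    rw [gfun_eq]
    linear_combination -hH

end Stmt3Aux

/-- The map `exp_α` is a bijection on the dual of the non-unital tensor algebra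
`T₀(V)` of the multi-faced vector space `V = ⊕_{Q ∈ F} V^Q`: linear functionals on
`T₀(V)` are identified with families `ψ = (ψ_{n,f})` of multilinear functionals
(indexed by lengths `n ≥ 1` and face words `f`), and for every `φ` there is exactly one
`ψ` with `exp_α(ψ) = φ`, i.e. with
`φ(x₁⋯xₙ) = ∑_{π ∈ P(f)} α_π ψ^{⊗|π|}(x_π)` for all `n ≥ 1`. -/
theorem stmt_3 {F : Type} (V : F → Type) [∀ Q, AddCommGroup (V Q)] [∀ Q, Module ℂ (V Q)]
    (α : MFP F → ℂ)
    (hmonic : ∀ (n : ℕ) (f : Fin n → F) (S : Finset (Fin n)), S.Nonempty →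
      α (MFP.ofBlocks f S {S}) = 1)
    (φ : ∀ (n : ℕ) (f : Fin n → F), MultilinearMap ℂ (fun i => V (f i)) ℂ) :
    ∃ ψ : ∀ (n : ℕ) (f : Fin n → F), MultilinearMap ℂ (fun i => V (f i)) ℂ,
      (∀ (n : ℕ), 0 < n → ∀ (f : Fin n → F) (x : ∀ i, V (f i)),
        φ n f x = ∑ P ∈ partitionsOf (Finset.univ : Finset (Fin n)),
          α (MFP.ofBlocks f Finset.univ P) *
            ∏ β ∈ P, ψ β.card (fun j => f (β.orderIsoOfFin rfl j).1)
              (fun j => x (β.orderIsoOfFin rfl j).1)) ∧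
      ∀ ψ' : ∀ (n : ℕ) (f : Fin n → F), MultilinearMap ℂ (fun i => V (f i)) ℂ,
        (∀ (n : ℕ), 0 < n → ∀ (f : Fin n → F) (x : ∀ i, V (f i)),
          φ n f x = ∑ P ∈ partitionsOf (Finset.univ : Finset (Fin n)),
            α (MFP.ofBlocks f Finset.univ P) *
              ∏ β ∈ P, ψ' β.card (fun j => f (β.orderIsoOfFin rfl j).1)
                (fun j => x (β.orderIsoOfFin rfl j).1)) →
        ∀ (n : ℕ), 0 < n → ∀ f : Fin n → F, ψ' n f = ψ n f := by
  refine ⟨Stmt3Aux.psi α φ, fun n hn f x => Stmt3Aux.psi_spec α φ hmonic hn f x,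
    fun ψ' H n hn f => Stmt3Aux.psi_unique α φ hmonic ψ' H n hn f⟩
end

section
/- If a family of admissible weights (α_π) satisfies the splitting rule, the reduction rule and the color-change rule, then α_π = 1 for every interval partition π. -/
namespace MFP

variable {F : Type}

/-- Doubling the leg `i` (equivalently, `π` is the reduction of `π.double i` obtained by
merging the two neighboring same-face legs `i`, `i+1`, which lie in the same block). -/
def double (π : MFP F) (i : Fin π.n) : MFP F where
  n := π.n + 1
  face := fun j => π.face (i.predAbove j)
  rel := π.rel.comap (Fin.predAbove i)

/-- Uniting the blocks of the legs `i` and `j` into one block. -/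
def unite (π : MFP F) (i j : Fin π.n) : MFP F where
  n := π.n
  face := π.face
  rel :=
    { r := fun a b => π.rel.r a b ∨ ((π.rel.r a i ∨ π.rel.r a j) ∧ (π.rel.r b i ∨ π.rel.r b j))
      iseqv := by
        refine ⟨fun a => Or.inl (π.rel.iseqv.refl a), ?_, ?_⟩
        · rintro a b (h | ⟨ha, hb⟩)
          · exact Or.inl (π.rel.iseqv.symm h)
          · exact Or.inr ⟨hb, ha⟩
        · rintro a b c (hab | ⟨ha, hb⟩) (hbc | ⟨hb', hc⟩)
          · exact Or.inl (π.rel.iseqv.trans hab hbc)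
          · exact Or.inr ⟨hb'.imp (fun h => π.rel.iseqv.trans hab h)
              (fun h => π.rel.iseqv.trans hab h), hc⟩
          · exact Or.inr ⟨ha, hb.imp (fun h => π.rel.iseqv.trans (π.rel.iseqv.symm hbc) h)
              (fun h => π.rel.iseqv.trans (π.rel.iseqv.symm hbc) h)⟩
          · exact Or.inr ⟨ha, hc⟩ }

/-- The block of the leg `i`, as a finite set of legs. -/
noncomputable def block (π : MFP F) (i : Fin π.n) : Finset (Fin π.n) :=
  @Finset.filter _ (fun j => π.rel.r i j) (fun _ => Classical.propDecidable _) Finset.univ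

/-- The restriction of a multi-faced partition to a subset of the legs,
with the induced total order and faces. -/
def restrict (π : MFP F) (S : Finset (Fin π.n)) : MFP F where
  n := S.card
  face := fun j => π.face (S.orderIsoOfFin rfl j).1
  rel := π.rel.comap (fun j => (S.orderIsoOfFin rfl j).1)

/-- The two-block partition formed by the blocks of the legs `i` and `j`,
on their union with the induced order. -/
noncomputable def pair (π : MFP F) (i j : Fin π.n) : MFP F :=
  π.restrict (π.block i ∪ π.block j)

/-- The mirror image of a multi-faced partition. -/
def mirror (π : MFP F) : MFP F where
  n := π.n
  face := fun j => π.face j.rev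
  rel := π.rel.comap Fin.rev

/-- Changing the face of the leg `i` to `c`. -/
def updateFace (π : MFP F) (i : Fin π.n) (c : F) : MFP F where
  n := π.n
  face := Function.update π.face i c
  rel := π.rel

end MFP

/-- Admissible weights on multi-faced partitions (the symmetric case; block-permutation
invariance is built into the encoding of partitions as setoids):
monic on one-block partitions, equal to `1` on two-point two-block partitions,
invariant under reduction (equivalently, doubling of legs), satisfying the splitting rule
for blocks with neighboring legs of the same face, invariant under changing the face of
an extremal leg, and conjugated under mirror symmetry. -/
structure Admissible {F : Type} (α : MFP F → ℂ) : Prop where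
  monic : ∀ (n : ℕ), 0 < n → ∀ f : Fin n → F, α ⟨n, f, ⊤⟩ = 1
  twoPoint : ∀ (f : Fin 2 → F) (r : Setoid (Fin 2)), ¬ r.r 0 1 → α ⟨2, f, r⟩ = 1
  reduction : ∀ (π : MFP F) (i : Fin π.n), α (π.double i) = α π
  splitRule : ∀ (π : MFP F) (i j : Fin π.n), (j : ℕ) = (i : ℕ) + 1 → π.face i = π.face j →
    ¬ π.rel.r i j → α π = α (π.unite i j) * α (π.pair i j)
  changeFirst : ∀ (π : MFP F) (h : 0 < π.n) (c : F), α (π.updateFace ⟨0, h⟩ c) = α π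
  changeLast : ∀ (π : MFP F) (h : 0 < π.n) (c : F),
    α (π.updateFace ⟨π.n - 1, Nat.sub_lt h Nat.one_pos⟩ c) = α π
  mirrorConj : ∀ π : MFP F, α π.mirror = (starRingEnd ℂ) (α π)

/-- `π` is an interval partition: every block is an interval (convex set) of legs. -/
def IsIntervalPartition {F : Type} (π : MFP F) : Prop :=
  ∀ i j k : Fin π.n, i ≤ j → j ≤ k → π.rel.r i k → π.rel.r i j

section AuxProof

variable {F : Type}

private lemma predAbove_val' {n : ℕ} (p : Fin n) (j : Fin (n+1)) :
    ((p.predAbove j : Fin n) : ℕ) = if (p:ℕ) < (j:ℕ) then (j:ℕ) - 1 else (j:ℕ) := by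
  unfold Fin.predAbove
  split <;> rename_i h <;> rw [Fin.lt_def] at h <;>
    simp only [Fin.coe_castSucc, Fin.coe_pred, Fin.coe_castPred] at * <;> split <;> omega

private lemma mfp_mk_eq {n : ℕ} {f g : Fin n → F} {r s : Setoid (Fin n)}
    (hf : f = g) (hr : r = s) : (⟨n, f, r⟩ : MFP F) = ⟨n, g, s⟩ := by subst hf; subst hr; rfl

private lemma interval_comap' {n n' : ℕ} {g : Fin n' → Fin n} (hg : Monotone g)
    {f : Fin n → F} {f' : Fin n' → F} {r : Setoid (Fin n)}
    (h : IsIntervalPartition (⟨n, f, r⟩ : MFP F)) :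
    IsIntervalPartition (⟨n', f', r.comap g⟩ : MFP F) :=
  fun i j k hij hjk hik => h (g i) (g j) (g k) (hg hij) (hg hjk) hik

private lemma one_block' {α : MFP F → ℂ} (hα : Admissible α) (π : MFP F) (h : 0 < π.n)
    (hr : ∀ a b : Fin π.n, π.rel.r a b) : α π = 1 := by
  obtain ⟨n, f, r⟩ := π
  have hrt : r = ⊤ := Setoid.ext fun a b => ⟨fun _ => trivial, fun _ => hr a b⟩
  subst hrt
  exact hα.monic n h f

private lemma two_point'' {α : MFP F → ℂ} (hα : Admissible α) (π : MFP F) (h2 : π.n = 2)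
    (hr : ∀ a b : Fin π.n, a ≠ b → ¬ π.rel.r a b) : α π = 1 := by
  obtain ⟨n, f, r⟩ := π
  have h2' : n = 2 := h2
  subst h2'
  have h01 : (0 : Fin 2) ≠ 1 := by decide
  exact hα.twoPoint f r (hr 0 1 h01)

private lemma remove_last' {α : MFP F → ℂ} (hα : Admissible α) (m : ℕ)
    (f : Fin (m+2) → F) (r : Setoid (Fin (m+2)))
    (hr : r.r ⟨m, Nat.lt_add_of_pos_right Nat.two_pos⟩ ⟨m+1, Nat.lt_succ_self (m+1)⟩) :
    α ⟨m+2, f, r⟩ = α ⟨m+1, fun j => f j.castSucc, r.comap Fin.castSucc⟩ := by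
  have hgl : ∀ j : Fin (m+2), (j:ℕ) ≤ m →
      Fin.castSucc ((⟨m, Nat.lt_succ_self m⟩ : Fin (m+1)).predAbove j) = j := by
    intro j hj
    apply Fin.ext
    rw [Fin.coe_castSucc, predAbove_val']
    show (if m < (j:ℕ) then (j:ℕ) - 1 else (j:ℕ)) = (j:ℕ)
    split <;> omega
  have hgr : Fin.castSucc ((⟨m, Nat.lt_succ_self m⟩ : Fin (m+1)).predAbove
      ⟨m+1, Nat.lt_succ_self (m+1)⟩) = (⟨m, Nat.lt_add_of_pos_right Nat.two_pos⟩ : Fin (m+2)) := by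
    apply Fin.ext
    rw [Fin.coe_castSucc, predAbove_val']
    show (if m < m+1 then (m+1) - 1 else (m+1)) = m
    split <;> omega
  have hgrel : ∀ j : Fin (m+2),
      r.r (Fin.castSucc ((⟨m, Nat.lt_succ_self m⟩ : Fin (m+1)).predAbove j)) j := by
    intro j
    by_cases hj : (j:ℕ) ≤ m
    · rw [hgl j hj]
    · have hje : j = ⟨m+1, Nat.lt_succ_self (m+1)⟩ := Fin.ext (show (j:ℕ) = m+1 by omega)
      rw [hje, hgr]; exact hr
  have key : (MFP.updateFace ⟨m+2, f, r⟩ ⟨m+1, Nat.lt_succ_self (m+1)⟩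
        (f ⟨m, Nat.lt_add_of_pos_right Nat.two_pos⟩)) =
      (MFP.double ⟨m+1, fun j => f j.castSucc, r.comap Fin.castSucc⟩
        ⟨m, Nat.lt_succ_self m⟩) := by
    refine mfp_mk_eq ?_ ?_
    · funext j
      have hjlt : (j:ℕ) < m + 2 := j.2
      show Function.update f ⟨m+1, Nat.lt_succ_self (m+1)⟩
          (f ⟨m, Nat.lt_add_of_pos_right Nat.two_pos⟩) j =
        f (Fin.castSucc ((⟨m, Nat.lt_succ_self m⟩ : Fin (m+1)).predAbove j))
      by_cases hj : (j:ℕ) ≤ m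
      · have hne : j ≠ ⟨m+1, Nat.lt_succ_self (m+1)⟩ := by
          intro he
          have : (j:ℕ) = m+1 := by rw [he]
          omega
        rw [hgl j hj, Function.update_of_ne hne]
      · have hje : j = ⟨m+1, Nat.lt_succ_self (m+1)⟩ := Fin.ext (show (j:ℕ) = m+1 by omega)
        rw [hje, hgr, Function.update_self]
    · apply Setoid.ext
      intro a b
      show r.r a b ↔ r.r _ _
      constructor
      · intro h
        exact r.iseqv.trans (hgrel a) (r.iseqv.trans h (r.iseqv.symm (hgrel b)))
      · intro h
        exact r.iseqv.trans (r.iseqv.symm (hgrel a)) (r.iseqv.trans h (hgrel b))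
  calc α ⟨m+2, f, r⟩
      = α (MFP.updateFace ⟨m+2, f, r⟩ ⟨m+1, Nat.lt_succ_self (m+1)⟩
          (f ⟨m, Nat.lt_add_of_pos_right Nat.two_pos⟩)) :=
        (hα.changeLast ⟨m+2, f, r⟩ (Nat.succ_pos (m+1)) _).symm
    _ = α (MFP.double ⟨m+1, fun j => f j.castSucc, r.comap Fin.castSucc⟩
          ⟨m, Nat.lt_succ_self m⟩) := by rw [key]
    _ = α ⟨m+1, fun j => f j.castSucc, r.comap Fin.castSucc⟩ := hα.reduction _ _

private lemma remove_first' {α : MFP F → ℂ} (hα : Admissible α) (m : ℕ)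
    (f : Fin (m+2) → F) (r : Setoid (Fin (m+2)))
    (hr : r.r ⟨0, Nat.succ_pos (m+1)⟩ ⟨1, Nat.succ_lt_succ (Nat.succ_pos m)⟩) :
    α ⟨m+2, f, r⟩ = α ⟨m+1, fun j => f j.succ, r.comap Fin.succ⟩ := by
  have hgl : ∀ j : Fin (m+2), 1 ≤ (j:ℕ) →
      Fin.succ ((⟨0, Nat.succ_pos m⟩ : Fin (m+1)).predAbove j) = j := by
    intro j hj
    apply Fin.ext
    rw [Fin.val_succ, predAbove_val']
    show (if 0 < (j:ℕ) then (j:ℕ) - 1 else (j:ℕ)) + 1 = (j:ℕ)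
    split <;> omega
  have hgr : Fin.succ ((⟨0, Nat.succ_pos m⟩ : Fin (m+1)).predAbove ⟨0, Nat.succ_pos (m+1)⟩) =
      (⟨1, Nat.succ_lt_succ (Nat.succ_pos m)⟩ : Fin (m+2)) := by
    apply Fin.ext
    rw [Fin.val_succ, predAbove_val']
    show (if 0 < 0 then 0 - 1 else 0) + 1 = 1
    split <;> omega
  have hgrel : ∀ j : Fin (m+2),
      r.r (Fin.succ ((⟨0, Nat.succ_pos m⟩ : Fin (m+1)).predAbove j)) j := by
    intro j
    by_cases hj : 1 ≤ (j:ℕ)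
    · rw [hgl j hj]
    · have hje : j = ⟨0, Nat.succ_pos (m+1)⟩ := Fin.ext (show (j:ℕ) = 0 by omega)
      rw [hje, hgr]; exact r.iseqv.symm hr
  have key : (MFP.updateFace ⟨m+2, f, r⟩ ⟨0, Nat.succ_pos (m+1)⟩
        (f ⟨1, Nat.succ_lt_succ (Nat.succ_pos m)⟩)) =
      (MFP.double ⟨m+1, fun j => f j.succ, r.comap Fin.succ⟩ ⟨0, Nat.succ_pos m⟩) := by
    refine mfp_mk_eq ?_ ?_
    · funext j
      have hjlt : (j:ℕ) < m + 2 := j.2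
      show Function.update f ⟨0, Nat.succ_pos (m+1)⟩
          (f ⟨1, Nat.succ_lt_succ (Nat.succ_pos m)⟩) j =
        f (Fin.succ ((⟨0, Nat.succ_pos m⟩ : Fin (m+1)).predAbove j))
      by_cases hj : 1 ≤ (j:ℕ)
      · have hne : j ≠ ⟨0, Nat.succ_pos (m+1)⟩ := by
          intro he
          have : (j:ℕ) = 0 := by rw [he]
          omega
        rw [hgl j hj, Function.update_of_ne hne]
      · have hje : j = ⟨0, Nat.succ_pos (m+1)⟩ := Fin.ext (show (j:ℕ) = 0 by omega)
        rw [hje, hgr, Function.update_self]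
    · apply Setoid.ext
      intro a b
      show r.r a b ↔ r.r _ _
      constructor
      · intro h
        exact r.iseqv.trans (hgrel a) (r.iseqv.trans h (r.iseqv.symm (hgrel b)))
      · intro h
        exact r.iseqv.trans (r.iseqv.symm (hgrel a)) (r.iseqv.trans h (hgrel b))
  calc α ⟨m+2, f, r⟩
      = α (MFP.updateFace ⟨m+2, f, r⟩ ⟨0, Nat.succ_pos (m+1)⟩
          (f ⟨1, Nat.succ_lt_succ (Nat.succ_pos m)⟩)) :=
        (hα.changeFirst ⟨m+2, f, r⟩ (Nat.succ_pos (m+1)) _).symm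
    _ = α (MFP.double ⟨m+1, fun j => f j.succ, r.comap Fin.succ⟩ ⟨0, Nat.succ_pos m⟩) := by
        rw [key]
    _ = α ⟨m+1, fun j => f j.succ, r.comap Fin.succ⟩ := hα.reduction _ _

private lemma main_interval {α : MFP F → ℂ} (hα : Admissible α) :
    ∀ n : ℕ, ∀ (f : Fin n → F) (r : Setoid (Fin n)),
      0 < n → IsIntervalPartition (⟨n, f, r⟩ : MFP F) → α ⟨n, f, r⟩ = 1 := by
  intro n
  induction n using Nat.strong_induction_on with
  | _ n IH =>
  intro f r hn hint
  classical
  match n, hn, f, r, hint, IH with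
  | 0, hh, f, r, hint, IH => exact absurd hh (Nat.lt_irrefl 0)
  | 1, _, f, r, hint, IH =>
    exact one_block' hα _ Nat.one_pos fun a b => by
      have hab : a = b := Subsingleton.elim a b
      rw [hab]
  | (m+2), _, f, r, hint, IH =>
    have pm : m < m + 2 := Nat.lt_add_of_pos_right Nat.two_pos
    have pm1 : m + 1 < m + 2 := Nat.lt_succ_self (m+1)
    have p0 : 0 < m + 2 := Nat.succ_pos (m+1)
    have p1 : 1 < m + 2 := Nat.succ_lt_succ (Nat.succ_pos m)
    have hmonoc : Monotone (Fin.castSucc : Fin (m+1) → Fin (m+2)) := by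
      intro a b h
      rw [Fin.le_def] at h ⊢
      simpa using h
    have hmonos : Monotone (Fin.succ : Fin (m+1) → Fin (m+2)) := by
      intro a b h
      rw [Fin.le_def] at h ⊢
      simp only [Fin.val_succ]
      omega
    by_cases hlast : r.r ⟨m, pm⟩ ⟨m+1, pm1⟩
    · rw [remove_last' hα m f r hlast]
      exact IH (m+1) (by omega) _ _ (Nat.succ_pos m) (interval_comap' hmonoc hint)
    by_cases hfirst : r.r ⟨0, p0⟩ ⟨1, p1⟩
    · rw [remove_first' hα m f r hfirst]
      exact IH (m+1) (by omega) _ _ (Nat.succ_pos m) (interval_comap' hmonos hint)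
    -- both extreme blocks are singletons; split at (m, m+1)
    set π₁ : MFP F := MFP.updateFace ⟨m+2, f, r⟩ ⟨m+1, pm1⟩ (f ⟨m, pm⟩) with hπ₁
    have h1 : α π₁ = α ⟨m+2, f, r⟩ := hα.changeLast ⟨m+2, f, r⟩ p0 (f ⟨m, pm⟩)
    have hne : (⟨m, pm⟩ : Fin (m+2)) ≠ ⟨m+1, pm1⟩ := by
      intro he
      have : m = m + 1 := congrArg Fin.val he
      omega
    have hface : π₁.face ⟨m, pm⟩ = π₁.face ⟨m+1, pm1⟩ := by
      show Function.update f ⟨m+1, pm1⟩ (f ⟨m, pm⟩) ⟨m, pm⟩ =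
        Function.update f ⟨m+1, pm1⟩ (f ⟨m, pm⟩) ⟨m+1, pm1⟩
      rw [Function.update_of_ne hne, Function.update_self]
    have hsplit : α π₁ = α (π₁.unite ⟨m, pm⟩ ⟨m+1, pm1⟩) * α (π₁.pair ⟨m, pm⟩ ⟨m+1, pm1⟩) :=
      hα.splitRule π₁ ⟨m, pm⟩ ⟨m+1, pm1⟩ rfl hface hlast
    -- the united partition is an interval partition
    have hintu : IsIntervalPartition
        (⟨m+2, Function.update f ⟨m+1, pm1⟩ (f ⟨m, pm⟩),
          (π₁.unite ⟨m, pm⟩ ⟨m+1, pm1⟩).rel⟩ : MFP F) := by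
      intro a b c hab hbc hac
      have hav : (a:ℕ) < m+2 := a.2
      have hbv : (b:ℕ) < m+2 := b.2
      have hab' : (a:ℕ) ≤ (b:ℕ) := hab
      have hbc' : (b:ℕ) ≤ (c:ℕ) := hbc
      rcases hac with h | ⟨ha, _⟩
      · exact Or.inl (hint a b c hab hbc h)
      · refine Or.inr ⟨ha, ?_⟩
        by_cases hbm : (b:ℕ) = m+1
        · refine Or.inr ?_
          rw [show b = ⟨m+1, pm1⟩ from Fin.ext hbm]
          exact π₁.rel.iseqv.refl _
        · have hblem : (b:ℕ) ≤ m := by omega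
          have hai : r.r a ⟨m, pm⟩ := by
            rcases ha with h' | h'
            · exact h'
            · exact hint a ⟨m, pm⟩ ⟨m+1, pm1⟩
                (Fin.le_def.mpr (show (a:ℕ) ≤ m by omega))
                (Fin.le_def.mpr (show m ≤ m+1 by omega)) h'
          have hrab : r.r a b := hint a b ⟨m, pm⟩ hab (Fin.le_def.mpr hblem) hai
          exact Or.inl (r.iseqv.trans (r.iseqv.symm hrab) hai)
    have huij : (π₁.unite ⟨m, pm⟩ ⟨m+1, pm1⟩).rel.r ⟨m, pm⟩ ⟨m+1, pm1⟩ :=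
      Or.inr ⟨Or.inl (r.iseqv.refl _), Or.inr (r.iseqv.refl _)⟩
    have hu1 : α (π₁.unite ⟨m, pm⟩ ⟨m+1, pm1⟩) = 1 := by
      calc α (π₁.unite ⟨m, pm⟩ ⟨m+1, pm1⟩)
          = α ⟨m+1, fun j => (Function.update f ⟨m+1, pm1⟩ (f ⟨m, pm⟩)) j.castSucc,
              (π₁.unite ⟨m, pm⟩ ⟨m+1, pm1⟩).rel.comap Fin.castSucc⟩ :=
            remove_last' hα m _ _ huij
        _ = 1 := IH (m+1) (by omega) _ _ (Nat.succ_pos m) (interval_comap' hmonoc hintu)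
    -- the pair partition
    have hmemS : ∀ x : Fin (m+2),
        x ∈ π₁.block ⟨m, pm⟩ ∪ π₁.block ⟨m+1, pm1⟩ ↔
          (r.r ⟨m, pm⟩ x ∨ r.r ⟨m+1, pm1⟩ x) := by
      intro x
      constructor
      · intro hx
        rcases Finset.mem_union.1 hx with h | h
        · exact Or.inl ((@Finset.mem_filter _ _ (fun _ => Classical.propDecidable _) _ _).1 h).2
        · exact Or.inr ((@Finset.mem_filter _ _ (fun _ => Classical.propDecidable _) _ _).1 h).2
      · intro hx
        rcases hx with h | h
        · exact Finset.mem_union.2 (Or.inl ((@Finset.mem_filter _ _ (fun _ => Classical.propDecidable _) _ _).2 ⟨Finset.mem_univ x, h⟩))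
        · exact Finset.mem_union.2 (Or.inr ((@Finset.mem_filter _ _ (fun _ => Classical.propDecidable _) _ _).2 ⟨Finset.mem_univ x, h⟩))
    have hp1 : α (π₁.pair ⟨m, pm⟩ ⟨m+1, pm1⟩) = 1 := by
      rcases Nat.eq_zero_or_pos m with hm0 | hm
      · -- m = 0 : two-point two-block partition
        subst hm0
        apply two_point'' hα
        · show (π₁.block ⟨0, pm⟩ ∪ π₁.block ⟨1, pm1⟩).card = 2
          have huniv : π₁.block ⟨0, pm⟩ ∪ π₁.block ⟨1, pm1⟩ = Finset.univ := by
            apply Finset.eq_univ_of_forall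
            intro x
            apply (hmemS x).2
            rcases (show (x:ℕ) = 0 ∨ (x:ℕ) = 1 from by
                have hx2 : (x:ℕ) < 2 := x.2
                omega) with h | h
            · refine Or.inl ?_
              rw [show x = ⟨0, pm⟩ from Fin.ext h]
              exact r.iseqv.refl _
            · refine Or.inr ?_
              rw [show x = ⟨1, pm1⟩ from Fin.ext h]
              exact r.iseqv.refl _
          rw [huniv, Finset.card_univ, Fintype.card_fin]
          exact rfl
        · intro a b hab hrab
          have hall : ∀ x y : Fin (0+2), x ≠ y → ¬ r.r x y := by
            intro x y hxy hr'
            have hv : (x:ℕ) ≠ (y:ℕ) := fun h => hxy (Fin.ext h)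
            have hx2 : (x:ℕ) < 2 := x.2
            have hy2 : (y:ℕ) < 2 := y.2
            rcases (show ((x:ℕ) = 0 ∧ (y:ℕ) = 1) ∨ ((x:ℕ) = 1 ∧ (y:ℕ) = 0) by omega) with
              ⟨h1', h2'⟩ | ⟨h1', h2'⟩
            · rw [show x = ⟨0, p0⟩ from Fin.ext h1', show y = ⟨1, p1⟩ from Fin.ext h2'] at hr'
              exact hfirst hr'
            · rw [show x = ⟨1, p1⟩ from Fin.ext h1', show y = ⟨0, p0⟩ from Fin.ext h2'] at hr'
              exact hfirst (r.iseqv.symm hr')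
          have hrab' : r.r
              (((π₁.block ⟨0, pm⟩ ∪ π₁.block ⟨1, pm1⟩).orderIsoOfFin rfl a).1)
              (((π₁.block ⟨0, pm⟩ ∪ π₁.block ⟨1, pm1⟩).orderIsoOfFin rfl b).1) := hrab
          refine hall _ _ ?_ hrab'
          intro h
          exact hab (((π₁.block ⟨0, pm⟩ ∪ π₁.block ⟨1, pm1⟩).orderIsoOfFin
            rfl).injective (Subtype.ext h))
      · -- m ≥ 1 : the pair partition has fewer legs
        have h0S : ∀ x : Fin (m+2), (r.r ⟨m, pm⟩ x ∨ r.r ⟨m+1, pm1⟩ x) → (x:ℕ) ≠ 0 := by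
          intro x hx h0
          have hx0 : x = ⟨0, p0⟩ := Fin.ext h0
          subst hx0
          apply hfirst
          rcases hx with h | h
          · exact hint ⟨0, p0⟩ ⟨1, p1⟩ ⟨m, pm⟩ (Fin.le_def.mpr (show (0:ℕ) ≤ 1 by omega))
              (Fin.le_def.mpr (show (1:ℕ) ≤ m by omega)) (r.iseqv.symm h)
          · exact hint ⟨0, p0⟩ ⟨1, p1⟩ ⟨m+1, pm1⟩ (Fin.le_def.mpr (show (0:ℕ) ≤ 1 by omega))
              (Fin.le_def.mpr (show (1:ℕ) ≤ m+1 by omega)) (r.iseqv.symm h)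
        have hSsub : (π₁.block ⟨m, pm⟩ ∪ π₁.block ⟨m+1, pm1⟩) ⊆
            Finset.univ.erase (⟨0, p0⟩ : Fin (m+2)) := by
          intro x hx
          refine Finset.mem_erase.2 ?_
          refine ⟨fun he => h0S x ((hmemS x).1 hx) ?_, Finset.mem_univ x⟩
          rw [he]
        have hcard : (π₁.block ⟨m, pm⟩ ∪ π₁.block ⟨m+1, pm1⟩).card < m + 2 := by
          calc (π₁.block ⟨m, pm⟩ ∪ π₁.block ⟨m+1, pm1⟩).card
              ≤ (Finset.univ.erase (⟨0, p0⟩ : Fin (m+2))).card := Finset.card_le_card hSsub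
            _ < m + 2 := by
                rw [Finset.card_erase_of_mem (Finset.mem_univ _), Finset.card_univ,
                  Fintype.card_fin]
                omega
        have hpos : 0 < (π₁.block ⟨m, pm⟩ ∪ π₁.block ⟨m+1, pm1⟩).card :=
          Finset.card_pos.2 ⟨⟨m, pm⟩, (hmemS _).2 (Or.inl (r.iseqv.refl _))⟩
        have hmonoe : Monotone (fun k =>
            (((π₁.block ⟨m, pm⟩ ∪ π₁.block ⟨m+1, pm1⟩).orderIsoOfFin rfl) k).1) :=
          fun a b h => ((π₁.block ⟨m, pm⟩ ∪ π₁.block ⟨m+1, pm1⟩).orderIsoOfFin rfl).monotone h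
        exact IH (π₁.block ⟨m, pm⟩ ∪ π₁.block ⟨m+1, pm1⟩).card hcard _ _ hpos
          (interval_comap' hmonoe hint)
    calc α ⟨m+2, f, r⟩ = α π₁ := h1.symm
      _ = α (π₁.unite ⟨m, pm⟩ ⟨m+1, pm1⟩) * α (π₁.pair ⟨m, pm⟩ ⟨m+1, pm1⟩) := hsplit
      _ = 1 := by rw [hu1, hp1, one_mul]

end AuxProof


/-- Admissible weights (satisfying, in particular, the splitting rule, the reduction rule
and the face-change rule) take the value `1` on every interval partition. -/
theorem stmt_4 {F : Type} (α : MFP F → ℂ) (hα : Admissible α) (π : MFP F)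
    (hn : 0 < π.n) (hπ : IsIntervalPartition π) : α π = 1 := by
  obtain ⟨n, f, r⟩ := π
  exact main_interval hα n f r hn hπ
end

section
/- Let α be monic, singleton-inductive weights on multi-faced partitions and define cumulants by the symmetric moment-cumulant relation. Suppose A is a multi-faced algebra with unital faces (units 1^Q) and φ a linear functional with φ(1^Q) = 1 for all faces Q and vanishing on the ideal generated by the differences 1^q − 1^Q. Then for every n > 1 and any tensor a₁ ⊗ ⋯ ⊗ aₙ with a_s = 1^Q for some index s, the cumulant functional satisfies log_α φ̂ (a₁ ⊗ ⋯ ⊗ aₙ) = 0. -/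
/-- Ordered product of the family `a` over the index set `S`. -/
def oprod {A : Type} [Monoid A] {n : ℕ} (a : Fin n → A) (S : Finset (Fin n)) : A :=
  ((S.sort (· ≤ ·)).map a).prod

/-- `c` is the family of `α`-cumulants of the multi-faced family `a` (with face word `f`)
with respect to the functional `Φ`: the symmetric moment-cumulant relation holds on every
nonempty subfamily. -/
def MomentCumulantRel {F A : Type} [Ring A] (α : MFP F → ℂ) {n : ℕ}
    (f : Fin n → F) (Φ : A → ℂ) (a : Fin n → A) (c : Finset (Fin n) → ℂ) : Prop :=
  ∀ S : Finset (Fin n), S.Nonempty →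
    Φ (oprod a S) = ∑ P ∈ partitionsOf S, α (MFP.ofBlocks f S P) * ∏ β ∈ P, c β

section Aux

lemma sort_erase' {n : ℕ} (S : Finset (Fin n)) (s : Fin n) :
    (S.erase s).sort (· ≤ ·) = (S.sort (· ≤ ·)).erase s := by
  apply fun hp => List.Perm.eq_of_pairwise' (Finset.pairwise_sort _ _)
    ((Finset.pairwise_sort S (· ≤ ·)).sublist List.erase_sublist) hp
  rw [← Multiset.coe_eq_coe]
  rw [Finset.sort_eq, ← Multiset.coe_erase, Finset.sort_eq, Finset.erase_val]

lemma part_block {γ : Type} [DecidableEq γ] {S : Finset γ} {P : Finset (Finset γ)}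
    (h : IsPartitionOf S P) {i : γ} (hi : i ∈ S) :
    ∃ b ∈ P, i ∈ b ∧ ∀ b' ∈ P, i ∈ b' → b' = b := by
  obtain ⟨b, hb⟩ := Finset.card_eq_one.1 (h.2 i hi)
  have hbm : b ∈ P.filter (fun b => i ∈ b) := by rw [hb]; exact Finset.mem_singleton_self b
  rw [Finset.mem_filter] at hbm
  refine ⟨b, hbm.1, hbm.2, fun b' hb' hib' => ?_⟩
  have : b' ∈ P.filter (fun b => i ∈ b) := Finset.mem_filter.2 ⟨hb', hib'⟩
  rw [hb, Finset.mem_singleton] at this; exact this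

lemma part_top {γ : Type} [DecidableEq γ] {S : Finset γ} {P : Finset (Finset γ)}
    (h : IsPartitionOf S P) (hS : S ∈ P) : P = {S} := by
  apply Finset.eq_singleton_iff_unique_mem.2
  refine ⟨hS, fun b hb => ?_⟩
  obtain ⟨hne, hsub⟩ := h.1 b hb
  obtain ⟨i, hi⟩ := hne
  obtain ⟨b', _, _, huniq⟩ := part_block h (hsub hi)
  rw [huniq b hb hi, huniq S hS (hsub hi)]

lemma top_is_partition {γ : Type} [DecidableEq γ] {S : Finset γ} (h : S.Nonempty) :
    IsPartitionOf S {S} := by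
  constructor
  · intro b hb; rw [Finset.mem_singleton] at hb; subst hb; exact ⟨h, le_refl _⟩
  · intro i hi
    rw [Finset.filter_singleton, if_pos hi, Finset.card_singleton]

lemma erase_partition {γ : Type} [DecidableEq γ] {S : Finset γ} {P : Finset (Finset γ)}
    {s : γ} (h : IsPartitionOf S P) (hs : {s} ∈ P) :
    IsPartitionOf (S.erase s) (P.erase {s}) := by
  have hsS : s ∈ S := (h.1 _ hs).2 (Finset.mem_singleton_self s)
  constructor
  · intro b hb
    rw [Finset.mem_erase] at hb
    obtain ⟨hne, hsub⟩ := h.1 b hb.2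
    refine ⟨hne, fun x hx => Finset.mem_erase.2 ⟨?_, hsub hx⟩⟩
    rintro rfl
    obtain ⟨b', _, _, huniq⟩ := part_block h hsS
    exact hb.1 ((huniq b hb.2 hx).trans (huniq {x} hs (Finset.mem_singleton_self x)).symm)
  · intro i hi
    rw [Finset.mem_erase] at hi
    have : (P.erase ({s} : Finset γ)).filter (fun b => i ∈ b) = P.filter (fun b => i ∈ b) := by
      ext b
      simp only [Finset.mem_filter, Finset.mem_erase]
      refine ⟨fun ⟨⟨_, h1⟩, h2⟩ => ⟨h1, h2⟩, fun ⟨h1, h2⟩ => ⟨⟨?_, h1⟩, h2⟩⟩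
      rintro rfl; exact hi.1 (Finset.mem_singleton.1 h2)
    rw [this]; exact h.2 i hi.2

lemma insert_partition {γ : Type} [DecidableEq γ] {S : Finset γ} {P : Finset (Finset γ)}
    {s : γ} (h : IsPartitionOf (S.erase s) P) (hs : s ∈ S) :
    IsPartitionOf S (insert {s} P) ∧ {s} ∉ P := by
  have hnotP : {s} ∉ P := by
    intro hmem
    exact (Finset.mem_erase.1 ((h.1 _ hmem).2 (Finset.mem_singleton_self s))).1 rfl
  refine ⟨⟨?_, ?_⟩, hnotP⟩
  · intro b hb
    rcases Finset.mem_insert.1 hb with rfl | hb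
    · exact ⟨⟨s, Finset.mem_singleton_self s⟩, Finset.singleton_subset_iff.2 hs⟩
    · exact ⟨(h.1 b hb).1, (h.1 b hb).2.trans (Finset.erase_subset _ _)⟩
  · intro i hi
    by_cases his : i = s
    · subst his
      have : (insert ({i} : Finset γ) P).filter (fun b => i ∈ b) = {{i}} := by
        ext b
        simp only [Finset.mem_filter, Finset.mem_insert, Finset.mem_singleton]
        constructor
        · rintro ⟨rfl | hb, h2⟩
          · rfl
          · exact absurd ((h.1 b hb).2 h2) (by simp)
        · rintro rfl; exact ⟨Or.inl rfl, Finset.mem_singleton_self i⟩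
      rw [this, Finset.card_singleton]
    · have : (insert ({s} : Finset γ) P).filter (fun b => i ∈ b) = P.filter (fun b => i ∈ b) := by
        ext b
        simp only [Finset.mem_filter, Finset.mem_insert]
        constructor
        · rintro ⟨rfl | hb, h2⟩
          · exact absurd (Finset.mem_singleton.1 h2) his
          · exact ⟨hb, h2⟩
        · rintro ⟨hb, h2⟩; exact ⟨Or.inr hb, h2⟩
      rw [this]; exact h.2 i (Finset.mem_erase.2 ⟨his, hi⟩)

lemma singleton_partition {γ : Type} [DecidableEq γ] {s : γ} {P : Finset (Finset γ)}
    (h : IsPartitionOf {s} P) : P = {{s}} := by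
  apply part_top h
  obtain ⟨b, hb, hsb, _⟩ := part_block h (Finset.mem_singleton_self s)
  have : b = {s} := Finset.Subset.antisymm ((h.1 b hb).2) (Finset.singleton_subset_iff.2 hsb)
  rwa [← this]

lemma phi_unit {F A : Type} [Ring A] [Algebra ℂ A] (e : F → A) (φ : A →ₗ[ℂ] ℂ)
    (hideal : ∀ (x y : A) (q Q : F), φ (x * (e q - e Q) * y) = 0)
    (Q : F) (x y : A) (h : (∃ q, e q * y = y) ∨ (∃ q, x * e q = x)) :
    φ (x * e Q * y) = φ (x * y) := by
  rcases h with ⟨q, hq⟩ | ⟨q, hq⟩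
  · have h0 := hideal x y q Q
    have hx : x * (e q - e Q) * y = x * y - x * e Q * y := by
      rw [mul_sub, sub_mul, mul_assoc x (e q) y, hq]
    rw [hx, map_sub, sub_eq_zero] at h0
    exact h0.symm
  · have h0 := hideal x y q Q
    have hx : x * (e q - e Q) * y = x * y - x * e Q * y := by
      rw [mul_sub, sub_mul, hq]
    rw [hx, map_sub, sub_eq_zero] at h0
    exact h0.symm

end Aux

/-- For monic, singleton-inductive weights `α`, a multi-faced algebra with unital faces
(units `1^Q = e Q`) and a linear functional `φ` which is `1` on each face unit and
vanishes on the ideal generated by the differences `1^q − 1^Q`, the `α`-cumulants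
(`log_α φ̂`) vanish on every tensor `a₁ ⊗ ⋯ ⊗ aₙ` with `n > 1` in which some entry is a
face unit. -/
theorem stmt_14 {F : Type} (A : Type) [Ring A] [Algebra ℂ A]
    (faceAlg : F → NonUnitalSubalgebra ℂ A) (e : F → A)
    (he : ∀ Q : F, e Q ∈ faceAlg Q)
    (hunit : ∀ Q : F, ∀ x ∈ faceAlg Q, e Q * x = x ∧ x * e Q = x)
    (φ : A →ₗ[ℂ] ℂ)
    (hφe : ∀ Q : F, φ (e Q) = 1)
    (hideal : ∀ (x y : A) (q Q : F), φ (x * (e q - e Q) * y) = 0)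
    (α : MFP F → ℂ)
    (hmonic : ∀ (k : ℕ) (f : Fin k → F) (S : Finset (Fin k)), S.Nonempty →
      α (MFP.ofBlocks f S {S}) = 1)
    (hsing : ∀ (k : ℕ) (f : Fin k → F) (S : Finset (Fin k)) (P : Finset (Finset (Fin k)))
      (s : Fin k), IsPartitionOf S P → {s} ∈ P →
      α (MFP.ofBlocks f S P) = α (MFP.ofBlocks f (S.erase s) (P.erase {s})))
    {n : ℕ} (f : Fin n → F) (a : Fin n → A) (s : Fin n) (Q : F)
    (hmem : ∀ i : Fin n, i ≠ s → a i ∈ faceAlg (f i))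
    (has : a s = e Q)
    (c : Finset (Fin n) → ℂ)
    (hc : MomentCumulantRel α f (fun x => φ x) a c)
    (hn : 1 < n) :
    c Finset.univ = 0 := by
  classical
  have hcs : c {s} = 1 := by
    have h1 := hc {s} ⟨s, Finset.mem_singleton_self s⟩
    dsimp only at h1
    have hop : oprod a {s} = a s := by
      simp [oprod, Finset.sort_singleton]
    have hps : partitionsOf ({s} : Finset (Fin n)) = {{{s}}} := by
      ext P
      simp only [partitionsOf, Finset.mem_filter, Finset.mem_univ, true_and,
        Finset.mem_singleton]
      exact ⟨singleton_partition,
        by rintro rfl; exact top_is_partition ⟨s, Finset.mem_singleton_self s⟩⟩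
    rw [hop, hps, Finset.sum_singleton, Finset.prod_singleton,
      hmonic n f {s} ⟨s, Finset.mem_singleton_self s⟩, one_mul] at h1
    rw [← h1, has, hφe]
  have hstep : ∀ S : Finset (Fin n), s ∈ S → 2 ≤ S.card →
      φ (oprod a S) = φ (oprod a (S.erase s)) := by
    intro S hsS hcard
    obtain ⟨l₁, l₂, hsplit⟩ := List.append_of_mem ((Finset.mem_sort (· ≤ ·)).2 hsS)
    have hnd : (l₁ ++ s :: l₂).Nodup := hsplit ▸ Finset.sort_nodup S (· ≤ ·)
    rw [List.nodup_append] at hnd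
    obtain ⟨-, hnd2, hdisj⟩ := hnd
    have hs2 : s ∉ l₂ := (List.nodup_cons.1 hnd2).1
    have hs1 : s ∉ l₁ := fun h => hdisj s h s List.mem_cons_self rfl
    have hmemS : ∀ j, j ∈ l₁ ++ s :: l₂ → j ∈ S := fun j hj =>
      (Finset.mem_sort (· ≤ ·)).1 (hsplit ▸ hj)
    have hop1 : oprod a S = (l₁.map a).prod * e Q * (l₂.map a).prod := by
      unfold oprod
      rw [hsplit]
      simp [List.prod_append, has, mul_assoc]
    have herase : (S.erase s).sort (· ≤ ·) = l₁ ++ l₂ := by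
      rw [sort_erase', hsplit, List.erase_append_right _ hs1, List.erase_cons_head]
    have hop2 : oprod a (S.erase s) = (l₁.map a).prod * (l₂.map a).prod := by
      unfold oprod
      rw [herase]
      simp [List.prod_append]
    rw [hop1, hop2]
    cases l₂ with
    | cons j t =>
      apply phi_unit e φ hideal
      left
      refine ⟨f j, ?_⟩
      have hjs : j ≠ s := fun h => hs2 (h ▸ (List.mem_cons_self : j ∈ j :: t))
      rw [List.map_cons, List.prod_cons, ← mul_assoc,
        (hunit (f j) (a j) (hmem j hjs)).1]
    | nil =>
      rcases List.eq_nil_or_concat' l₁ with rfl | ⟨l', j, rfl⟩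
      · exfalso
        have : S.card = 1 := by
          rw [← Finset.length_sort (· ≤ ·), hsplit]; simp
        omega
      · apply phi_unit e φ hideal
        right
        refine ⟨f j, ?_⟩
        have hjs : j ≠ s := fun h => hs1 (h ▸ by simp)
        rw [List.map_append, List.prod_append, List.map_singleton,
          List.prod_singleton, mul_assoc, (hunit (f j) (a j) (hmem j hjs)).2]
  have key : ∀ m : ℕ, ∀ S : Finset (Fin n), S.card ≤ m → s ∈ S → 2 ≤ S.card → c S = 0 := by
    intro m
    induction m with
    | zero => intro S h1 _ h2; omega
    | succ m ih =>
      intro S hle hsS hcard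
      have hSne : S.Nonempty := ⟨s, hsS⟩
      have h1 := hc S hSne
      dsimp only at h1
      rw [hstep S hsS hcard] at h1
      have hEne : (S.erase s).Nonempty := by
        rw [← Finset.card_pos, Finset.card_erase_of_mem hsS]; omega
      have h2 := hc (S.erase s) hEne
      dsimp only at h2
      rw [← Finset.sum_filter_add_sum_filter_not (partitionsOf S)
        (fun P => ({s} : Finset (Fin n)) ∈ P)] at h1
      have hsum1 : ∑ P ∈ (partitionsOf S).filter (fun P => ({s} : Finset (Fin n)) ∈ P),
          α (MFP.ofBlocks f S P) * ∏ β ∈ P, c β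
          = ∑ P ∈ partitionsOf (S.erase s),
              α (MFP.ofBlocks f (S.erase s) P) * ∏ β ∈ P, c β := by
        apply Finset.sum_nbij' (fun P => P.erase {s}) (fun P => insert {s} P)
        · intro P hP
          rw [Finset.mem_filter] at hP
          have hpart : IsPartitionOf S P := by
            simpa [partitionsOf] using hP.1
          simpa [partitionsOf] using erase_partition hpart hP.2
        · intro P hP
          have hpart : IsPartitionOf (S.erase s) P := by
            simpa [partitionsOf] using hP
          obtain ⟨hi1, _⟩ := insert_partition hpart hsS
          rw [Finset.mem_filter]
          exact ⟨by simpa [partitionsOf] using hi1, Finset.mem_insert_self _ _⟩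
        · intro P hP
          rw [Finset.mem_filter] at hP
          exact Finset.insert_erase hP.2
        · intro P hP
          have hpart : IsPartitionOf (S.erase s) P := by
            simpa [partitionsOf] using hP
          exact Finset.erase_insert (insert_partition hpart hsS).2
        · intro P hP
          rw [Finset.mem_filter] at hP
          have hpart : IsPartitionOf S P := by
            simpa [partitionsOf] using hP.1
          rw [hsing n f S P s hpart hP.2, ← Finset.mul_prod_erase P c hP.2, hcs, one_mul]
      have hSmem : ({S} : Finset (Finset (Fin n))) ∈
          (partitionsOf S).filter (fun P => ¬ ({s} : Finset (Fin n)) ∈ P) := by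
        rw [Finset.mem_filter]
        refine ⟨by simpa [partitionsOf] using top_is_partition hSne, ?_⟩
        simp only [Finset.mem_singleton]
        intro hss
        rw [← hss] at hcard
        simp at hcard
      have hz : ∀ P ∈ (partitionsOf S).filter (fun P => ¬ ({s} : Finset (Fin n)) ∈ P),
          P ≠ {S} → α (MFP.ofBlocks f S P) * ∏ β ∈ P, c β = 0 := by
        intro P hP hne
        rw [Finset.mem_filter] at hP
        have hpart : IsPartitionOf S P := by
          simpa [partitionsOf] using hP.1
        obtain ⟨b, hbP, hsb, _⟩ := part_block hpart hsS
        have hb0 : c b = 0 := by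
          apply ih b ?_ hsb ?_
          · have hbS : b ⊆ S := (hpart.1 b hbP).2
            have hbne : b ≠ S := by rintro rfl; exact hne (part_top hpart hbP)
            have := Finset.card_lt_card (Finset.ssubset_iff_subset_ne.2 ⟨hbS, hbne⟩)
            omega
          · have hbs : b ≠ {s} := by rintro rfl; exact hP.2 hbP
            have h1' : 1 ≤ b.card := Finset.card_pos.2 ⟨s, hsb⟩
            rcases eq_or_lt_of_le h1' with hcb | hcb
            · exfalso
              obtain ⟨x, hx⟩ := Finset.card_eq_one.1 hcb.symm
              apply hbs
              rw [hx] at hsb ⊢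
              rw [Finset.mem_singleton.1 hsb]
            · exact hcb
        rw [Finset.prod_eq_zero hbP hb0, mul_zero]
      have hsum2 : ∑ P ∈ (partitionsOf S).filter (fun P => ¬ ({s} : Finset (Fin n)) ∈ P),
          α (MFP.ofBlocks f S P) * ∏ β ∈ P, c β = c S := by
        rw [Finset.sum_eq_single_of_mem _ hSmem hz, hmonic n f S hSne, one_mul,
          Finset.prod_singleton]
      rw [hsum1, hsum2, ← h2] at h1
      linear_combination -h1
  refine key n Finset.univ ?_ (Finset.mem_univ s) ?_
  · simp
  · simp only [Finset.card_univ, Fintype.card_fin]; omega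
end
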